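/- Let S be a profinite semigroup. Then Green's relation L on S is a closed equivalence relation (that is, the set {(u,v) ∈ S × S : u L v} is closed in S × S), and the quotient topological space S/L is compact, Hausdorff, and totally disconnected. -/

import Mathlib

/-- A bundled finite semigroup. -/
structure FinSgp : Type 1 where
  carrier : Type
  [str : Semigroup carrier]
  [fin : Finite carrier]

attribute [instance] FinSgp.str FinSgp.fin

/-- Finite semigroups carry the discrete topology. -/
instance (T : FinSgp) : TopologicalSpace T.carrier := ⊥

instance (T : FinSgp) : DiscreteTopology T.carrier := ⟨rfl⟩

/-- A pseudovariety of finite semigroups: a class of finite semigroups closed under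
homomorphic images, (isomorphic copies of) subsemigroups, and binary direct products. -/
def IsPseudovariety (V : Set FinSgp) : Prop :=
  (∀ S ∈ V, ∀ (T : FinSgp) (f : S.carrier →ₙ* T.carrier), Function.Surjective f → T ∈ V) ∧
  (∀ S ∈ V, ∀ (T : FinSgp) (f : T.carrier →ₙ* S.carrier), Function.Injective f → T ∈ V) ∧
  (∀ S ∈ V, ∀ T ∈ V, (FinSgp.mk (S.carrier × T.carrier)) ∈ V)

/-- A profinite semigroup: a compact, Hausdorff, totally disconnected topological semigroup. -/
def IsProfiniteSgp (S : Type) [Semigroup S] [TopologicalSpace S] : Prop :=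
  ContinuousMul S ∧ CompactSpace S ∧ T2Space S ∧ TotallyDisconnectedSpace S

/-- A pro-V semigroup: a profinite semigroup whose points are separated by continuous
homomorphisms onto finite semigroups belonging to V. -/
def IsProV (V : Set FinSgp) (S : Type) [Semigroup S] [TopologicalSpace S] : Prop :=
  IsProfiniteSgp S ∧ ∀ x y : S, x ≠ y →
    ∃ (T : FinSgp) (f : S →ₙ* T.carrier),
      T ∈ V ∧ Continuous f ∧ Function.Surjective f ∧ f x ≠ f y

/-- `A` topologically generates the topological semigroup `S`. -/
def TopGen (S : Type) [Semigroup S] [TopologicalSpace S] (A : Set S) : Prop :=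
  closure ((Subsemigroup.closure A : Subsemigroup S) : Set S) = Set.univ

/-- A topological semigroup is locally countable if every closed subsemigroup
topologically generated by a finite subset is countable. -/
def IsLocCountable (S : Type) [Semigroup S] [TopologicalSpace S] : Prop :=
  ∀ A : Set S, A.Finite →
    (closure ((Subsemigroup.closure A : Subsemigroup S) : Set S)).Countable

/-- A pseudovariety is locally countable if every pro-V semigroup is locally countable. -/
def PVLocallyCountable (V : Set FinSgp) : Prop :=
  ∀ (S : Type) [Semigroup S] [TopologicalSpace S], IsProV V S → IsLocCountable S

/-- A pseudovariety is locally finite if every finitely generated pro-V semigroup is finite. -/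
def PVLocallyFinite (V : Set FinSgp) : Prop :=
  ∀ (S : Type) [Semigroup S] [TopologicalSpace S], IsProV V S →
    (∃ A : Set S, A.Finite ∧ TopGen S A) → Finite S

/-- The join of two pseudovarieties: the smallest pseudovariety containing both. -/
def PVJoin (V W : Set FinSgp) : Set FinSgp :=
  ⋂₀ {U | IsPseudovariety U ∧ V ⊆ U ∧ W ⊆ U}

/-- The preimage of an idempotent under a semigroup homomorphism, as a subsemigroup. -/
def idemFiber {S T : Type} [Semigroup S] [Semigroup T] (f : S →ₙ* T)
    (e : T) (he : e * e = e) : Subsemigroup S where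
  carrier := f ⁻¹' {e}
  mul_mem' := fun {a b} ha hb => by
    simp only [Set.mem_preimage, Set.mem_singleton_iff] at ha hb ⊢
    rw [map_mul, ha, hb, he]

/-- A subsemigroup of a finite semigroup, as a bundled finite semigroup. -/
def subFinSgp {S : Type} [Semigroup S] [Finite S] (T : Subsemigroup S) : FinSgp :=
  FinSgp.mk T

/-- The generators of the Mal'cev product `V ⓜ W`: finite semigroups `S` admitting a
homomorphism onto some `T ∈ W` whose fibers over idempotents lie in `V`. -/
def MalcevWitness (V W : Set FinSgp) (S : FinSgp) : Prop :=
  ∃ (T : FinSgp) (f : S.carrier →ₙ* T.carrier), T ∈ W ∧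
    ∀ (e : T.carrier) (he : e * e = e), subFinSgp (idemFiber f e he) ∈ V

/-- The Mal'cev product of two pseudovarieties: the smallest pseudovariety containing
all its generators. -/
def Malcev (V W : Set FinSgp) : Set FinSgp :=
  ⋂₀ {U | IsPseudovariety U ∧ ∀ S : FinSgp, MalcevWitness V W S → S ∈ U}

/-- Green's preorder `≤_L`. -/
def lLE {S : Type} [Semigroup S] (u v : S) : Prop := u = v ∨ ∃ x, u = x * v

/-- Green's relation `L`. -/
def GreenL {S : Type} [Semigroup S] (u v : S) : Prop := lLE u v ∧ lLE v u

/-- Green's preorder `≤_J`. -/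
def jLE {S : Type} [Semigroup S] (u v : S) : Prop :=
  u = v ∨ (∃ x, u = v * x) ∨ (∃ x, u = x * v) ∨ (∃ x y, u = x * v * y)

/-- Green's relation `J`. -/
def GreenJ {S : Type} [Semigroup S] (u v : S) : Prop := jLE u v ∧ jLE v u

/-- A regular element of a semigroup. -/
def IsRegularElt {S : Type} [Semigroup S] (s : S) : Prop := ∃ t, s = s * t * s

/-- `S` has only finitely many regular `J`-classes. -/
def FinManyRegJ (S : Type) [Semigroup S] : Prop :=
  ∃ F : Set S, F.Finite ∧ ∀ s : S, IsRegularElt s → ∃ t ∈ F, GreenJ s t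

/-- A subgroup of a semigroup: a subsemigroup which is a group under the induced
multiplication. -/
def IsSgpSubgroup (S : Type) [Semigroup S] (G : Set S) : Prop :=
  (∀ x ∈ G, ∀ y ∈ G, x * y ∈ G) ∧
  ∃ e ∈ G, (∀ x ∈ G, e * x = x ∧ x * e = x) ∧ (∀ x ∈ G, ∃ y ∈ G, x * y = e ∧ y * x = e)

/-- A group element of a semigroup: an element lying in some subgroup. -/
def IsGroupElt (S : Type) [Semigroup S] (s : S) : Prop :=
  ∃ G : Set S, IsSgpSubgroup S G ∧ s ∈ G

/-- `prodFrom f n` is the product `f 0 * f 1 * ⋯ * f n`. -/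
def prodFrom {S : Type} [Semigroup S] (f : ℕ → S) : ℕ → S
  | 0 => f 0
  | n + 1 => prodFrom f n * f (n + 1)

/-- A semigroup is nilpotent if it has a zero element and some length bound beyond
which all products equal zero. -/
def IsNilpotentSgp (S : Type) [Semigroup S] : Prop :=
  ∃ z : S, (∀ x : S, z * x = z ∧ x * z = z) ∧ ∃ n : ℕ, ∀ f : ℕ → S, prodFrom f n = z

/-- The pseudovariety `N` of finite nilpotent semigroups. -/
def NPv : Set FinSgp := {S | IsNilpotentSgp S.carrier}

/-- A semigroup which is a group. -/
def IsGroupSgp (S : Type) [Semigroup S] : Prop :=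
  ∃ e : S, (∀ x : S, e * x = x ∧ x * e = x) ∧ ∀ x : S, ∃ y : S, x * y = e ∧ y * x = e

/-- The pseudovariety `LG` of finite local groups: `eSe` is a group for each idempotent `e`. -/
def LG : Set FinSgp :=
  {S | ∀ e : S.carrier, e * e = e → ∀ s : S.carrier,
      ∃ t : S.carrier, (e * s * e) * (e * t * e) = e ∧ (e * t * e) * (e * s * e) = e}

/-- The pseudovariety `IE` of finite semigroups with exactly one idempotent. -/
def IE : Set FinSgp := {S | ∃! e : S.carrier, e * e = e}

/-- A bundled topological semigroup (carrier, multiplication, topology). -/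
structure TopSgp : Type 1 where
  carrier : Type
  [str : Semigroup carrier]
  [top : TopologicalSpace carrier]

attribute [instance] TopSgp.str TopSgp.top

/-- The fiber of a relational morphism over an idempotent, as a subsemigroup of the
domain. -/
def relFiber {S T : Type} [Semigroup S] [Semigroup T] (μ : Subsemigroup (S × T))
    (e : T) (he : e * e = e) : Subsemigroup S where
  carrier := {s | (s, e) ∈ μ}
  mul_mem' := fun {a b} ha hb => by
    have h := μ.mul_mem ha hb
    simpa [Prod.mk_mul_mk, he] using h

/-- `spow x n = x ^ (n + 1)` in a semigroup. -/
def spow {S : Type} [Semigroup S] (x : S) : ℕ → S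
  | 0 => x
  | n + 1 => spow x n * x

/-- The pseudovariety `A ∩ ESl` of finite aperiodic semigroups with commuting idempotents. -/
def AESl : Set FinSgp :=
  {S | (∃ n : ℕ, ∀ x : S.carrier, spow x (n + 1) = spow x n) ∧
       (∀ e f : S.carrier, e * e = e → f * f = f → e * f = f * e)}



section GreenLAux

variable {S : Type} [Semigroup S] [TopologicalSpace S]

/-- The set `{v} ∪ Sv`. -/
private def lSet (v : S) : Set S := insert v (Set.range (fun x => x * v))

private lemma mem_lSet_iff {u v : S} : u ∈ lSet v ↔ lLE u v := by
  simp only [lSet, Set.mem_insert_iff, Set.mem_range, lLE]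
  constructor
  · rintro (rfl | ⟨x, rfl⟩)
    · exact Or.inl rfl
    · exact Or.inr ⟨x, rfl⟩
  · rintro (rfl | ⟨x, rfl⟩)
    · exact Or.inl rfl
    · exact Or.inr ⟨x, rfl⟩

private lemma lLE_trans {u v w : S} (h1 : lLE u v) (h2 : lLE v w) : lLE u w := by
  rcases h1 with rfl | ⟨x, rfl⟩
  · exact h2
  · rcases h2 with rfl | ⟨y, rfl⟩
    · exact Or.inr ⟨x, rfl⟩
    · exact Or.inr ⟨x * y, (mul_assoc x y w).symm⟩

private lemma lSet_subset {u v : S} (h : lLE u v) : lSet u ⊆ lSet v := fun w hw =>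
  mem_lSet_iff.2 (lLE_trans (mem_lSet_iff.1 hw) h)

private lemma greenL_lSet_eq {u v : S} (h : GreenL u v) : lSet u = lSet v :=
  subset_antisymm (lSet_subset h.1) (lSet_subset h.2)

private lemma lSet_isCompact [CompactSpace S] [ContinuousMul S] (v : S) :
    IsCompact (lSet v) :=
  (isCompact_range (continuous_id.mul continuous_const)).insert v

private lemma isClosed_lLE_graph [CompactSpace S] [T2Space S] [ContinuousMul S] :
    IsClosed {p : S × S | lLE p.1 p.2} := by
  have heq : {p : S × S | lLE p.1 p.2} =
      (Set.diagonal S) ∪ Set.range (fun q : S × S => (q.1 * q.2, q.2)) := by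
    ext p
    simp only [Set.mem_setOf_eq, Set.mem_union, Set.mem_diagonal_iff, Set.mem_range, lLE]
    constructor
    · rintro (h | ⟨x, hx⟩)
      · exact Or.inl h
      · exact Or.inr ⟨(x, p.2), by simp [← hx]⟩
    · rintro (h | ⟨q, hq⟩)
      · exact Or.inl h
      · refine Or.inr ⟨q.1, ?_⟩
        rw [← hq]
  rw [heq]
  exact isClosed_diagonal.union
    (isCompact_range ((continuous_fst.mul continuous_snd).prodMk continuous_snd)).isClosed

private lemma exists_clopen_sep [CompactSpace S] [T2Space S] [TotallyDisconnectedSpace S]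
    {K : Set S} (hK : IsCompact K) {s : S} (hs : s ∉ K) :
    ∃ U : Set S, IsClopen U ∧ s ∈ U ∧ Disjoint U K := by
  have : TotallySeparatedSpace S := loc_compact_t2_tot_disc_iff_tot_sep.mp ‹_›
  choose V hV using fun y : K => exists_isClopen_of_totally_separated
      (show (y : S) ≠ s from fun h => hs (h ▸ y.2))
  obtain ⟨F, hF⟩ := hK.elim_finite_subcover (fun y : K => V y) (fun y => (hV y).1.isOpen)
      (fun z hz => Set.mem_iUnion.2 ⟨⟨z, hz⟩, (hV ⟨z, hz⟩).2.1⟩)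
  refine ⟨(⋃ y ∈ F, V y)ᶜ, (isClopen_biUnion_finset (fun y _ => (hV y).1)).compl, ?_, ?_⟩
  · simp only [Set.mem_compl_iff, Set.mem_iUnion]
    rintro ⟨y, _, hy⟩
    exact (hV y).2.2 hy
  · exact Set.disjoint_left.2 fun z hz hzK => hz (hF hzK)

private lemma isClopen_lMeet [CompactSpace S] [T2Space S] [ContinuousMul S]
    {U : Set S} (hU : IsClopen U) : IsClopen {s : S | (lSet s ∩ U).Nonempty} := by
  constructor
  · have heq : {s : S | (lSet s ∩ U).Nonempty} =
        U ∪ Prod.snd '' ((fun p : S × S => p.1 * p.2) ⁻¹' U) := by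
      ext s
      simp only [Set.mem_setOf_eq, Set.mem_union, Set.mem_image, Set.mem_preimage]
      constructor
      · rintro ⟨w, hw, hwU⟩
        rcases mem_lSet_iff.1 hw with rfl | ⟨x, rfl⟩
        · exact Or.inl hwU
        · exact Or.inr ⟨(x, s), hwU, rfl⟩
      · rintro (h | ⟨⟨x, t⟩, hx, rfl⟩)
        · exact ⟨s, Set.mem_insert _ _, h⟩
        · exact ⟨x * t, mem_lSet_iff.2 (Or.inr ⟨x, rfl⟩), hx⟩
    rw [heq]
    exact hU.isClosed.union
      (((hU.isClosed.preimage (continuous_fst.mul continuous_snd)).isCompact).image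
        continuous_snd).isClosed
  · have heq : {s : S | (lSet s ∩ U).Nonempty} =
        U ∪ ⋃ x : S, (fun s => x * s) ⁻¹' U := by
      ext s
      simp only [Set.mem_setOf_eq, Set.mem_union, Set.mem_iUnion, Set.mem_preimage]
      constructor
      · rintro ⟨w, hw, hwU⟩
        rcases mem_lSet_iff.1 hw with rfl | ⟨x, rfl⟩
        · exact Or.inl hwU
        · exact Or.inr ⟨x, hwU⟩
      · rintro (h | ⟨x, hx⟩)
        · exact ⟨s, Set.mem_insert _ _, h⟩
        · exact ⟨x * s, mem_lSet_iff.2 (Or.inr ⟨x, rfl⟩), hx⟩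
    rw [heq]
    exact hU.isOpen.union (isOpen_iUnion fun x => hU.isOpen.preimage
      (continuous_const.mul continuous_id))

end GreenLAux

/-- In a profinite semigroup, Green's relation `L` is a closed
equivalence relation and the quotient space is compact, Hausdorff and totally
disconnected. -/
theorem greenL_closed_and_quotient_profinite
    (S : Type) [Semigroup S] [TopologicalSpace S] (hS : IsProfiniteSgp S) :
    IsClosed {p : S × S | GreenL p.1 p.2} ∧ Equivalence (GreenL (S := S)) ∧
      CompactSpace (Quot (GreenL (S := S))) ∧ T2Space (Quot (GreenL (S := S))) ∧
      TotallyDisconnectedSpace (Quot (GreenL (S := S))) := by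
  obtain ⟨hmul, hcomp, ht2, htd⟩ := hS
  haveI := hmul; haveI := hcomp; haveI := ht2; haveI := htd
  have hequiv : Equivalence (GreenL (S := S)) :=
    ⟨fun x => ⟨Or.inl rfl, Or.inl rfl⟩, fun h => ⟨h.2, h.1⟩,
      fun h1 h2 => ⟨lLE_trans h1.1 h2.1, lLE_trans h2.2 h1.2⟩⟩
  have hclosed : IsClosed {p : S × S | GreenL p.1 p.2} := by
    have heq : {p : S × S | GreenL p.1 p.2} =
        {p : S × S | lLE p.1 p.2} ∩ (Prod.swap ⁻¹' {p : S × S | lLE p.1 p.2}) := rfl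
    rw [heq]
    exact isClosed_lLE_graph.inter (isClosed_lLE_graph.preimage continuous_swap)
  -- the separating map into a product of booleans
  set Φ : S → ({U : Set S // IsClopen U} → Bool) :=
    fun s U => ({t : S | (lSet t ∩ U.1).Nonempty}).boolIndicator s with hΦ
  have hΦcont : Continuous Φ := continuous_pi fun U =>
    (continuous_boolIndicator_iff_isClopen _).mpr (isClopen_lMeet U.2)
  have hresp : ∀ a b : S, GreenL a b → Φ a = Φ b := by
    intro a b h
    have hls : lSet a = lSet b := greenL_lSet_eq h
    funext U
    simp only [hΦ]
    set A : Set S := {t : S | (lSet t ∩ U.1).Nonempty} with hA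
    by_cases hm : a ∈ A
    · rw [(Set.mem_iff_boolIndicator A a).1 hm,
        (Set.mem_iff_boolIndicator A b).1
          (show (lSet b ∩ U.1).Nonempty from hls ▸ hm)]
    · rw [(Set.notMem_iff_boolIndicator A a).1 hm,
        (Set.notMem_iff_boolIndicator A b).1
          (show ¬(lSet b ∩ U.1).Nonempty from hls ▸ hm)]
  have hsep : ∀ a b : S, Φ a = Φ b → GreenL a b := by
    have key : ∀ a b : S, Φ a = Φ b → lLE a b := by
      intro a b h
      by_contra hab
      have ha : a ∉ lSet b := fun hm => hab (mem_lSet_iff.1 hm)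
      obtain ⟨U, hU, haU, hdisj⟩ := exists_clopen_sep (lSet_isCompact b) ha
      have h1 : a ∈ {t : S | (lSet t ∩ U).Nonempty} :=
        ⟨a, Set.mem_insert _ _, haU⟩
      have h2 : b ∉ {t : S | (lSet t ∩ U).Nonempty} := by
        rintro ⟨w, hw, hwU⟩
        exact Set.disjoint_right.1 hdisj hw hwU
      have := congrFun h ⟨U, hU⟩
      simp only [hΦ] at this
      rw [(Set.mem_iff_boolIndicator {t : S | (lSet t ∩ U).Nonempty} a).1 h1,
        (Set.notMem_iff_boolIndicator {t : S | (lSet t ∩ U).Nonempty} b).1 h2] at this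
      exact Bool.noConfusion this
    exact fun a b h => ⟨key a b h, key b a h.symm⟩
  refine ⟨hclosed, hequiv, Quot.compactSpace, ?_, ?_⟩
  · haveI : CompactSpace (Quot (GreenL (S := S))) := Quot.compactSpace
    exact T2Space.of_injective_continuous
      (f := Quot.lift Φ hresp)
      (fun a b => Quot.induction_on₂ a b fun x y h => Quot.sound (hsep x y h))
      (continuous_quot_lift _ hΦcont)
  · refine ⟨isTotallyDisconnected_of_image
      (continuous_quot_lift hresp hΦcont).continuousOn
      (fun a b => Quot.induction_on₂ a b fun x y h => Quot.sound (hsep x y h))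
      (isTotallyDisconnected_of_totallyDisconnectedSpace _)⟩
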